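/- Let f : ℝ^d → ℝ be ρ-weakly convex, r : ℝ^d → ℝ ∪ {+∞} proper closed convex, and set φ = f + r. Let (Ω, F, P) be a probability space and G : ℝ^d × Ω → ℝ^d measurable with ∫ G(x,ξ) dP(ξ) a Fréchet subgradient of f at x and ∫ ‖G(x,ξ)‖² dP(ξ) ≤ L², for all x ∈ dom r. Fix ρ̄ ∈ (ρ, 2ρ], a stepsize α ∈ (0, 1/ρ̄], a point x ∈ dom r, and set x̂ = prox_{φ/ρ̄}(x). Suppose there is a Fréchet subgradient v̂ of f at x̂ with ‖v̂‖ ≤ L such that ρ̄(x − x̂) − v̂ ∈ ∂r(x̂). Then the proximal stochastic subgradient step x⁺(ξ) = prox_{αr}(x − αG(x,ξ)) satisfies ∫_Ω ‖x⁺(ξ) − x̂‖² dP(ξ) ≤ ‖x − x̂‖² + 4α²L² − 2α(ρ̄ − ρ)‖x − x̂‖². -/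

import Mathlib

open MeasureTheory RealInnerProductSpace

/-- Convexity for extended-real-valued functions `g : E → ℝ ∪ {+∞}` on a set `s`. -/
def ERealConvexOn {E : Type*} [AddCommMonoid E] [SMul ℝ E]
    (s : Set E) (g : E → EReal) : Prop :=
  ∀ x ∈ s, ∀ y ∈ s, ∀ a b : ℝ, 0 ≤ a → 0 ≤ b → a + b = 1 →
    g (a • x + b • y) ≤ (a : EReal) * g x + (b : EReal) * g y

/-- `v` is a Fréchet subgradient of the real-valued function `f` at `x`:
`f(y) ≥ f(x) + ⟨v, y − x⟩ + o(‖y − x‖)` as `y → x`. -/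
def IsFSubgradR {E : Type*} [NormedAddCommGroup E] [InnerProductSpace ℝ E]
    (f : E → ℝ) (x v : E) : Prop :=
  ∀ ε : ℝ, 0 < ε → ∃ δ : ℝ, 0 < δ ∧ ∀ y : E, ‖y - x‖ < δ →
    f x + ⟪v, y - x⟫ - ε * ‖y - x‖ ≤ f y

lemma fsubgrad_global {E : Type*} [NormedAddCommGroup E] [InnerProductSpace ℝ E]
    {f : E → ℝ} {ρ : ℝ} (hρ : 0 ≤ ρ)
    (hwc : ConvexOn ℝ Set.univ fun z => f z + ρ / 2 * ‖z‖ ^ 2)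
    {x v : E} (hv : IsFSubgradR f x v) (y : E) :
    f x + ρ / 2 * ‖x‖ ^ 2 + ⟪v + ρ • x, y - x⟫ ≤ f y + ρ / 2 * ‖y‖ ^ 2 := by
  rcases eq_or_ne y x with rfl | hne
  · simp
  have hn : 0 < ‖y - x‖ := by
    rw [norm_pos_iff, sub_ne_zero]; exact hne
  have main : ∀ ε : ℝ, 0 < ε →
      f x + ρ / 2 * ‖x‖ ^ 2 + ⟪v + ρ • x, y - x⟫ ≤ f y + ρ / 2 * ‖y‖ ^ 2 + ε * ‖y - x‖ := by
    intro ε hε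
    obtain ⟨δ, hδ, hsub⟩ := hv ε hε
    set t : ℝ := min 1 (δ / (2 * ‖y - x‖)) with htdef
    have ht0 : 0 < t := lt_min one_pos (by positivity)
    have ht1 : t ≤ 1 := min_le_left _ _
    have htδ : t * ‖y - x‖ < δ := by
      have h2 : t ≤ δ / (2 * ‖y - x‖) := min_le_right _ _
      have := mul_le_mul_of_nonneg_right h2 (le_of_lt hn)
      calc t * ‖y - x‖ ≤ δ / (2 * ‖y - x‖) * ‖y - x‖ := this
        _ = δ / 2 := by field_simp
        _ < δ := by linarith
    have hyt : ‖(x + t • (y - x)) - x‖ < δ := by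
      simpa [norm_smul, abs_of_pos ht0] using htδ
    have h1 := hsub _ hyt
    rw [add_sub_cancel_left] at h1
    have h2 := hwc.2 (Set.mem_univ x) (Set.mem_univ y) (by linarith : (0:ℝ) ≤ 1 - t)
      (le_of_lt ht0) (by ring)
    have heq : (1 - t) • x + t • y = x + t • (y - x) := by module
    rw [heq] at h2
    simp only [smul_eq_mul] at h2
    have hnorm : ‖x + t • (y - x)‖ ^ 2
        = ‖x‖ ^ 2 + 2 * (t * ⟪x, y - x⟫) + t ^ 2 * ‖y - x‖ ^ 2 := by
      rw [norm_add_sq_real, real_inner_smul_right, norm_smul, Real.norm_eq_abs,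
        abs_of_pos ht0, mul_pow]
    rw [hnorm] at h2
    have hinner : ⟪v + ρ • x, y - x⟫ = ⟪v, y - x⟫ + ρ * ⟪x, y - x⟫ := by
      rw [inner_add_left, real_inner_smul_left]
    have hins : ⟪v, t • (y - x)⟫ = t * ⟪v, y - x⟫ := real_inner_smul_right v _ t
    have hnt : ‖t • (y - x)‖ = t * ‖y - x‖ := by
      rw [norm_smul, Real.norm_eq_abs, abs_of_pos ht0]
    rw [hins, hnt] at h1
    rw [hinner]
    nlinarith [mul_nonneg (mul_nonneg hρ (sq_nonneg t)) (sq_nonneg ‖y - x‖), ht0,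
      mul_pos ht0 hn]
  by_contra hc
  push_neg at hc
  obtain ⟨A, B, hA, hB⟩ : ∃ A B : ℝ, A = f x + ρ / 2 * ‖x‖ ^ 2 + ⟪v + ρ • x, y - x⟫ ∧
      B = f y + ρ / 2 * ‖y‖ ^ 2 := ⟨_, _, rfl, rfl⟩
  rw [← hA, ← hB] at hc
  have hmain := main ((A - B) / (2 * ‖y - x‖)) (div_pos (by linarith) (by positivity))
  rw [← hA, ← hB] at hmain
  have heq : (A - B) / (2 * ‖y - x‖) * ‖y - x‖ = (A - B) / 2 := by
    field_simp
  rw [heq] at hmain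
  linarith

lemma fsubgrad_monotone {E : Type*} [NormedAddCommGroup E] [InnerProductSpace ℝ E]
    {f : E → ℝ} {ρ : ℝ} (hρ : 0 ≤ ρ)
    (hwc : ConvexOn ℝ Set.univ fun z => f z + ρ / 2 * ‖z‖ ^ 2)
    {x v y w : E} (hv : IsFSubgradR f x v) (hw : IsFSubgradR f y w) :
    -(ρ * ‖x - y‖ ^ 2) ≤ ⟪v - w, x - y⟫ := by
  have h1 := fsubgrad_global hρ hwc hv y
  have h2 := fsubgrad_global hρ hwc hw x
  have e1 : ⟪v + ρ • x, y - x⟫ = -⟪v, x - y⟫ - ρ * ⟪x, x - y⟫ := by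
    rw [show y - x = -(x - y) by abel, inner_neg_right, inner_add_left,
      real_inner_smul_left]
    ring
  have e2 : ⟪w + ρ • y, x - y⟫ = ⟪w, x - y⟫ + ρ * ⟪y, x - y⟫ := by
    rw [inner_add_left, real_inner_smul_left]
  have e3 : ⟪v - w, x - y⟫ = ⟪v, x - y⟫ - ⟪w, x - y⟫ := inner_sub_left v w (x - y)
  have e4 : ‖x - y‖ ^ 2 = ⟪x, x - y⟫ - ⟪y, x - y⟫ := by
    rw [← real_inner_self_eq_norm_sq, inner_sub_left]
  rw [e1] at h1; rw [e2] at h2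
  nlinarith [h1, h2]

set_option maxHeartbeats 1600000 in
/-- One step of the proximal stochastic subgradient method on `φ = f + r`, with `f`
`ρ`-weakly convex, `r` proper closed convex, stochastic subgradient oracle `G` with second
moment bound `L²`, `ρ̄ ∈ (ρ, 2ρ]`, stepsize `α ∈ (0, 1/ρ̄]`, proximal point
`x̂ = prox_{φ/ρ̄}(x)`, and a subgradient `v̂ ∈ ∂f(x̂)` with `‖v̂‖ ≤ L` such that
`ρ̄(x − x̂) − v̂ ∈ ∂r(x̂)`.  The step `x⁺(ξ) = prox_{αr}(x − αG(x,ξ))` satisfies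
`E‖x⁺(ξ) − x̂‖² ≤ ‖x − x̂‖² + 4α²L² − 2α(ρ̄ − ρ)‖x − x̂‖²`. -/
theorem proximal_stochastic_subgradient_contraction
    {E : Type*} [NormedAddCommGroup E] [InnerProductSpace ℝ E] [FiniteDimensional ℝ E]
    [MeasurableSpace E] [BorelSpace E]
    {Ω : Type*} [MeasurableSpace Ω] (P : Measure Ω) [IsProbabilityMeasure P]
    (f : E → ℝ) (ρ : ℝ)
    (hwc : ConvexOn ℝ Set.univ fun z => f z + ρ / 2 * ‖z‖ ^ 2)
    (r : E → EReal) (hrbot : ∀ y, r y ≠ ⊥) (hrproper : ∃ y, r y ≠ ⊤)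
    (hrlsc : LowerSemicontinuous r) (hrconv : ERealConvexOn Set.univ r)
    (G : E → Ω → E) (hGmeas : Measurable fun p : E × Ω => G p.1 p.2)
    (L : ℝ)
    (hGint : ∀ z : E, r z ≠ ⊤ → Integrable (G z) P)
    (hGgrad : ∀ z : E, r z ≠ ⊤ → IsFSubgradR f z (∫ ξ, G z ξ ∂P))
    (hGmom : ∀ z : E, r z ≠ ⊤ →
      ∫⁻ ξ, ENNReal.ofReal (‖G z ξ‖ ^ 2) ∂P ≤ ENNReal.ofReal (L ^ 2))
    (ρb : ℝ) (hρb1 : ρ < ρb) (hρb2 : ρb ≤ 2 * ρ)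
    (a : ℝ) (ha1 : 0 < a) (ha2 : a * ρb ≤ 1)
    (x : E) (hxdom : r x ≠ ⊤)
    (xhat : E)
    (hxhatmin : ∀ y : E,
      (f xhat : EReal) + r xhat + ((ρb / 2 * ‖xhat - x‖ ^ 2 : ℝ) : EReal)
        ≤ (f y : EReal) + r y + ((ρb / 2 * ‖y - x‖ ^ 2 : ℝ) : EReal))
    (vhat : E) (hvhat : IsFSubgradR f xhat vhat) (hvhatnorm : ‖vhat‖ ≤ L)
    (hstat : ∀ y : E,
      r xhat + ((⟪ρb • (x - xhat) - vhat, y - xhat⟫ : ℝ) : EReal) ≤ r y)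
    (s : Ω → E)
    (hs : ∀ ξ : Ω, ∀ y : E,
      r (s ξ) + ((1 / (2 * a) * ‖s ξ - (x - a • G x ξ)‖ ^ 2 : ℝ) : EReal)
        ≤ r y + ((1 / (2 * a) * ‖y - (x - a • G x ξ)‖ ^ 2 : ℝ) : EReal)) :
    ∫ ξ, ‖s ξ - xhat‖ ^ 2 ∂P
      ≤ ‖x - xhat‖ ^ 2 + 4 * a ^ 2 * L ^ 2 - 2 * a * (ρb - ρ) * ‖x - xhat‖ ^ 2 := by

  -- basic facts
  have hρ : (0:ℝ) < ρ := by linarith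
  have hL : 0 ≤ L := le_trans (norm_nonneg _) hvhatnorm
  have h1aρb : 0 ≤ 1 - a * ρb := by linarith
  -- measurability / integrability of the oracle
  have hmeasg : Measurable (G x) := hGmeas.comp measurable_prodMk_left
  have hsqmeas : Measurable fun ξ => ‖G x ξ‖ ^ 2 := by fun_prop
  have hsqint : Integrable (fun ξ => ‖G x ξ‖ ^ 2) P := by
    refine ⟨hsqmeas.aestronglyMeasurable, ?_⟩
    rw [hasFiniteIntegral_iff_ofReal (Filter.Eventually.of_forall fun ξ => by positivity)]
    exact lt_of_le_of_lt (hGmom x hxdom) ENNReal.ofReal_lt_top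
  have hsqbound : ∫ ξ, ‖G x ξ‖ ^ 2 ∂P ≤ L ^ 2 := by
    rw [integral_eq_lintegral_of_nonneg_ae (Filter.Eventually.of_forall fun ξ => by positivity)
      hsqmeas.aestronglyMeasurable]
    calc (∫⁻ ξ, ENNReal.ofReal (‖G x ξ‖ ^ 2) ∂P).toReal
        ≤ (ENNReal.ofReal (L ^ 2)).toReal :=
          ENNReal.toReal_mono (by simp) (hGmom x hxdom)
      _ = L ^ 2 := ENNReal.toReal_ofReal (by positivity)
  have hdmeas : Measurable fun ξ => ‖G x ξ - vhat‖ ^ 2 :=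
    ((hmeasg.sub measurable_const).norm.pow_const 2)
  have hbd : ∀ ξ, ‖G x ξ - vhat‖ ^ 2 ≤ 2 * ‖G x ξ‖ ^ 2 + 2 * ‖vhat‖ ^ 2 := fun ξ => by
    nlinarith [norm_sub_le (G x ξ) vhat, sq_nonneg (‖G x ξ‖ - ‖vhat‖),
      norm_nonneg (G x ξ - vhat), norm_nonneg (G x ξ), norm_nonneg vhat]
  have hgint2 : Integrable (fun ξ => 2 * ‖G x ξ‖ ^ 2 + 2 * ‖vhat‖ ^ 2) P :=
    (hsqint.const_mul 2).add (integrable_const _)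
  have hdint : Integrable (fun ξ => ‖G x ξ - vhat‖ ^ 2) P := by
    refine hgint2.mono' hdmeas.aestronglyMeasurable (Filter.Eventually.of_forall fun ξ => ?_)
    rw [Real.norm_eq_abs, abs_of_nonneg (by positivity)]
    exact hbd ξ
  have hdbound : ∫ ξ, ‖G x ξ - vhat‖ ^ 2 ∂P ≤ 4 * L ^ 2 := by
    calc ∫ ξ, ‖G x ξ - vhat‖ ^ 2 ∂P ≤ ∫ ξ, (2 * ‖G x ξ‖ ^ 2 + 2 * ‖vhat‖ ^ 2) ∂P :=
          integral_mono hdint hgint2 hbd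
      _ = 2 * ∫ ξ, ‖G x ξ‖ ^ 2 ∂P + 2 * ‖vhat‖ ^ 2 := by
          rw [integral_add (hsqint.const_mul 2) (integrable_const _), integral_const_mul,
            integral_const]
          simp
      _ ≤ 4 * L ^ 2 := by nlinarith [hsqbound, hvhatnorm, norm_nonneg vhat]
  -- finiteness of r at relevant points
  obtain ⟨rx, hrx⟩ : ∃ c : ℝ, r x = (c : EReal) :=
    ⟨(r x).toReal, (EReal.coe_toReal hxdom (hrbot x)).symm⟩
  have hxhat_ne : r xhat ≠ ⊤ := by
    intro htop
    have h := hxhatmin x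
    rw [htop, hrx] at h
    simp only [EReal.coe_add_top, EReal.top_add_coe, ← EReal.coe_add, top_le_iff,
      EReal.coe_ne_top] at h
  obtain ⟨rxh, hrxh⟩ : ∃ c : ℝ, r xhat = (c : EReal) :=
    ⟨(r xhat).toReal, (EReal.coe_toReal hxhat_ne (hrbot xhat)).symm⟩
  -- the subgradient v of f at x
  set v : E := ∫ ξ, G x ξ ∂P with hv
  have hvgrad : IsFSubgradR f x v := hGgrad x hxdom
  have hmono : -(ρ * ‖x - xhat‖ ^ 2) ≤ ⟪v - vhat, x - xhat⟫ :=
    fsubgrad_monotone (le_of_lt hρ) hwc hvgrad hvhat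
  -- the key pointwise nonexpansiveness estimate
  set u : E := ρb • (x - xhat) - vhat with hu
  have key : ∀ ξ : Ω, ‖s ξ - xhat‖ ^ 2
      ≤ ‖(x - a • G x ξ) - (xhat + a • u)‖ ^ 2 := by
    intro ξ
    have hsx := fun y => hs ξ y
    set p := s ξ with hp
    set z := x - a • G x ξ with hz
    have hp_ne : r p ≠ ⊤ := by
      intro htop
      have h := hsx x
      rw [htop, hrx] at h
      simp only [EReal.top_add_coe, ← EReal.coe_add, top_le_iff, EReal.coe_ne_top] at h
    obtain ⟨rp, hrp⟩ : ∃ c : ℝ, r p = (c : EReal) :=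
      ⟨(r p).toReal, (EReal.coe_toReal hp_ne (hrbot p)).symm⟩
    -- step 1: subgradient inequality for r at p, evaluated at xhat
    have hB : ∀ t : ℝ, 0 < t → t ≤ 1 →
        rp ≤ rxh + 1 / a * ⟪p - z, xhat - p⟫ + t * (1 / (2 * a) * ‖xhat - p‖ ^ 2) := by
      intro t ht0 ht1
      have hm := hrconv p (Set.mem_univ p) xhat (Set.mem_univ xhat) (1 - t) t
        (by linarith) (le_of_lt ht0) (by ring)
      rw [hrp, hrxh] at hm
      have hm' : r ((1 - t) • p + t • xhat) ≤ (((1 - t) * rp + t * rxh : ℝ) : EReal) := by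
        exact_mod_cast hm
      have hchain : ((rp + 1 / (2 * a) * ‖p - z‖ ^ 2 : ℝ) : EReal)
          ≤ (((1 - t) * rp + t * rxh + 1 / (2 * a) * ‖(1 - t) • p + t • xhat - z‖ ^ 2 : ℝ)
            : EReal) := by
        rw [EReal.coe_add, EReal.coe_add, ← hrp]
        exact le_trans (hsx _) (add_le_add hm' le_rfl)
      have hreal : rp + 1 / (2 * a) * ‖p - z‖ ^ 2
          ≤ (1 - t) * rp + t * rxh + 1 / (2 * a) * ‖(1 - t) • p + t • xhat - z‖ ^ 2 :=
        EReal.coe_le_coe_iff.mp hchain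
      have hexp : ‖(1 - t) • p + t • xhat - z‖ ^ 2
          = ‖p - z‖ ^ 2 + 2 * (t * ⟪p - z, xhat - p⟫) + t ^ 2 * ‖xhat - p‖ ^ 2 := by
        have he : (1 - t) • p + t • xhat - z = (p - z) + t • (xhat - p) := by module
        rw [he, norm_add_sq_real, real_inner_smul_right, norm_smul t (xhat - p),
          Real.norm_eq_abs, abs_of_pos ht0, mul_pow]
      rw [hexp] at hreal
      have h2a : 1 / a = 2 * (1 / (2 * a)) := by
        field_simp
      rw [h2a]
      refine le_of_mul_le_mul_left ?_ ht0
      nlinarith [hreal]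
    have hBlim : rp ≤ rxh + 1 / a * ⟪p - z, xhat - p⟫ := by
      by_contra hc
      push_neg at hc
      have hK : (0:ℝ) ≤ 1 / (2 * a) * ‖xhat - p‖ ^ 2 := by positivity
      have hgap : 0 < rp - (rxh + 1 / a * ⟪p - z, xhat - p⟫) := by linarith
      set K := 1 / (2 * a) * ‖xhat - p‖ ^ 2 with hKdef
      set t := min 1 ((rp - (rxh + 1 / a * ⟪p - z, xhat - p⟫)) / (2 * (K + 1))) with htdef
      have ht0 : 0 < t := lt_min one_pos (div_pos hgap (by linarith))
      have ht := hB t ht0 (min_le_left _ _)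
      have htle : t ≤ (rp - (rxh + 1 / a * ⟪p - z, xhat - p⟫)) / (2 * (K + 1)) :=
        min_le_right _ _
      have h1 : t * K ≤ (rp - (rxh + 1 / a * ⟪p - z, xhat - p⟫)) / (2 * (K + 1)) * (K + 1) := by
        apply mul_le_mul htle (by linarith) hK (le_of_lt (div_pos hgap (by linarith)))
      have h2 : (rp - (rxh + 1 / a * ⟪p - z, xhat - p⟫)) / (2 * (K + 1)) * (K + 1)
          = (rp - (rxh + 1 / a * ⟪p - z, xhat - p⟫)) / 2 := by
        field_simp
      rw [h2] at h1
      linarith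
    -- step 2: stationarity of xhat, evaluated at p
    have hA : rxh + ⟪u, p - xhat⟫ ≤ rp := by
      have h := hstat p
      rw [hrxh, hrp] at h
      exact_mod_cast h
    -- combine
    have hub : ⟪u, p - xhat⟫ ≤ 1 / a * ⟪p - z, xhat - p⟫ := by linarith
    have hinner1 : ⟪p - z, xhat - p⟫ = ⟪z - p, p - xhat⟫ := by
      rw [show p - z = -(z - p) by abel, show xhat - p = -(p - xhat) by abel, inner_neg_neg]
    have hmul : a * ⟪u, p - xhat⟫ ≤ ⟪z - p, p - xhat⟫ := by
      have h3 := mul_le_mul_of_nonneg_left hub (le_of_lt ha1)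
      rw [hinner1] at h3
      have h4 : a * (1 / a * ⟪z - p, p - xhat⟫) = ⟪z - p, p - xhat⟫ := by
        field_simp
      linarith
    have hgeo : ‖p - xhat‖ ^ 2 ≤ ⟪z - (xhat + a • u), p - xhat⟫ := by
      have he : z - (xhat + a • u) = (z - p) - a • u + (p - xhat) := by module
      rw [he, inner_add_left, inner_sub_left, real_inner_smul_left,
        real_inner_self_eq_norm_sq]
      linarith
    have hcs : ⟪z - (xhat + a • u), p - xhat⟫ ≤ ‖z - (xhat + a • u)‖ * ‖p - xhat‖ :=
      real_inner_le_norm _ _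
    have hnn := norm_nonneg (p - xhat)
    have h5 : ‖p - xhat‖ * ‖p - xhat‖ ≤ ‖z - (xhat + a • u)‖ * ‖p - xhat‖ := by
      rw [← sq]
      exact le_trans hgeo hcs
    rcases eq_or_lt_of_le hnn with h0 | h0
    · rw [← h0]
      simpa using sq_nonneg ‖z - (xhat + a • u)‖
    · have h6 : ‖p - xhat‖ ≤ ‖z - (xhat + a • u)‖ := le_of_mul_le_mul_right h5 h0
      exact pow_le_pow_left₀ hnn h6 2
  -- rewrite the majorant
  have hmaj : ∀ ξ : Ω, ‖(x - a • G x ξ) - (xhat + a • u)‖ ^ 2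
      = ‖(1 - a * ρb) • (x - xhat)‖ ^ 2
        - 2 * (a * ⟪(1 - a * ρb) • (x - xhat), G x ξ - vhat⟫)
        + a ^ 2 * ‖G x ξ - vhat‖ ^ 2 := by
    intro ξ
    have he : (x - a • G x ξ) - (xhat + a • u)
        = (1 - a * ρb) • (x - xhat) - a • (G x ξ - vhat) := by
      rw [hu]; module
    rw [he, norm_sub_sq_real, real_inner_smul_right, norm_smul a (G x ξ - vhat), Real.norm_eq_abs,
      abs_of_pos ha1, mul_pow]
  -- integrate
  have hinnerint : Integrable (fun ξ => ⟪(1 - a * ρb) • (x - xhat), G x ξ - vhat⟫) P :=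
    ((hGint x hxdom).sub (integrable_const vhat)).const_inner _
  have hint_majorant : Integrable (fun ξ => ‖(1 - a * ρb) • (x - xhat)‖ ^ 2
      - 2 * (a * ⟪(1 - a * ρb) • (x - xhat), G x ξ - vhat⟫)
      + a ^ 2 * ‖G x ξ - vhat‖ ^ 2) P :=
    ((integrable_const _).sub ((hinnerint.const_mul a).const_mul 2)).add (hdint.const_mul _)
  have hintle : ∫ ξ, ‖s ξ - xhat‖ ^ 2 ∂P ≤ ∫ ξ, (‖(1 - a * ρb) • (x - xhat)‖ ^ 2
      - 2 * (a * ⟪(1 - a * ρb) • (x - xhat), G x ξ - vhat⟫)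
      + a ^ 2 * ‖G x ξ - vhat‖ ^ 2) ∂P := by
    refine integral_mono_of_nonneg (Filter.Eventually.of_forall fun ξ => by positivity)
      hint_majorant (Filter.Eventually.of_forall fun ξ => ?_)
    exact (key ξ).trans (le_of_eq (hmaj ξ))
  have hintval : ∫ ξ, (‖(1 - a * ρb) • (x - xhat)‖ ^ 2
      - 2 * (a * ⟪(1 - a * ρb) • (x - xhat), G x ξ - vhat⟫)
      + a ^ 2 * ‖G x ξ - vhat‖ ^ 2) ∂P
      = ‖(1 - a * ρb) • (x - xhat)‖ ^ 2
        - 2 * (a * ⟪(1 - a * ρb) • (x - xhat), v - vhat⟫)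
        + a ^ 2 * ∫ ξ, ‖G x ξ - vhat‖ ^ 2 ∂P := by
    rw [integral_add
        (f := fun ξ => ‖(1 - a * ρb) • (x - xhat)‖ ^ 2
          - 2 * (a * ⟪(1 - a * ρb) • (x - xhat), G x ξ - vhat⟫))
        (g := fun ξ => a ^ 2 * ‖G x ξ - vhat‖ ^ 2)
        ((integrable_const _).sub ((hinnerint.const_mul a).const_mul 2))
        (hdint.const_mul _),
      integral_sub (f := fun _ => ‖(1 - a * ρb) • (x - xhat)‖ ^ 2)
        (g := fun ξ => 2 * (a * ⟪(1 - a * ρb) • (x - xhat), G x ξ - vhat⟫))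
        (integrable_const _) ((hinnerint.const_mul a).const_mul 2),
      integral_const, integral_const_mul, integral_const_mul, integral_const_mul,
      integral_inner (f := fun ξ => G x ξ - vhat) ((hGint x hxdom).sub (integrable_const vhat)),
      integral_sub (f := G x) (g := fun _ => vhat) (hGint x hxdom) (integrable_const vhat),
      integral_const]
    simp [hv]
  -- final arithmetic
  have hcn : ‖(1 - a * ρb) • (x - xhat)‖ ^ 2 = (1 - a * ρb) ^ 2 * ‖x - xhat‖ ^ 2 := by
    rw [norm_smul, Real.norm_eq_abs, abs_of_nonneg h1aρb, mul_pow]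
  have hci : ⟪(1 - a * ρb) • (x - xhat), v - vhat⟫ = (1 - a * ρb) * ⟪v - vhat, x - xhat⟫ := by
    rw [real_inner_smul_left, real_inner_comm]
  rw [hintval, hcn, hci] at hintle
  have hfin : (1 - a * ρb) ^ 2 * ‖x - xhat‖ ^ 2
      - 2 * (a * ((1 - a * ρb) * ⟪v - vhat, x - xhat⟫))
      + a ^ 2 * ∫ ξ, ‖G x ξ - vhat‖ ^ 2 ∂P
      ≤ ‖x - xhat‖ ^ 2 + 4 * a ^ 2 * L ^ 2 - 2 * a * (ρb - ρ) * ‖x - xhat‖ ^ 2 := by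
    have h1 : a ^ 2 * ∫ ξ, ‖G x ξ - vhat‖ ^ 2 ∂P ≤ a ^ 2 * (4 * L ^ 2) :=
      mul_le_mul_of_nonneg_left hdbound (by positivity)
    have h2 : -(2 * (a * ((1 - a * ρb) * ⟪v - vhat, x - xhat⟫)))
        ≤ 2 * (a * ((1 - a * ρb) * (ρ * ‖x - xhat‖ ^ 2))) := by
      have := mul_le_mul_of_nonneg_left hmono (mul_nonneg (le_of_lt ha1) h1aρb)
      nlinarith [this]
    nlinarith [sq_nonneg ‖x - xhat‖, mul_nonneg (mul_nonneg (sq_nonneg a)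
      (mul_nonneg (by linarith : (0:ℝ) ≤ ρb) (by linarith : (0:ℝ) ≤ 2 * ρ - ρb)))
      (sq_nonneg ‖x - xhat‖)]
  linarith
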